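/- The dimension of the nilpotent conjugacy class in gl_{n+1}(ℂ) with Jordan type λ equals (n+1)² − Σ_i (λ*_i)², where λ* is the dual partition. -/

import Mathlib

set_option maxHeartbeats 1000000
set_option synthInstance.maxHeartbeats 200000
open Polynomial Module

noncomputable section
abbrev Rp := Polynomial ℂ
abbrev Qm (a : ℕ) := Rp ⧸ (Ideal.span {(X : Rp) ^ a} : Ideal Rp)

-- test instances
example (a : ℕ) : Module Rp (Qm a) := inferInstance
example (a : ℕ) : Module ℂ (Qm a) := inferInstance
example (a : ℕ) : IsScalarTower ℂ Rp (Qm a) := inferInstance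

def adjEquiv (a : ℕ) : AdjoinRoot ((X : Rp) ^ a) ≃ₗ[ℂ] Qm a where
  toFun x := x
  map_add' _ _ := rfl
  map_smul' _ _ := rfl
  invFun x := x
  left_inv _ := rfl
  right_inv _ := rfl

def qbasis (a : ℕ) : Basis (Fin a) ℂ (Qm a) :=
  ((AdjoinRoot.powerBasis (pow_ne_zero a (X_ne_zero (R := ℂ)))).basis.map (adjEquiv a)).reindex
    (finCongr (by simp))

lemma qbasis_eq (a : ℕ) (i : Fin a) :
    qbasis a i = Submodule.Quotient.mk ((X : Rp) ^ (i : ℕ)) := by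
  have h0 := pow_ne_zero a (X_ne_zero (R := ℂ))
  have h1 : qbasis a i
      = adjEquiv a ((AdjoinRoot.powerBasis h0).basis
          ((finCongr (by simp : (AdjoinRoot.powerBasis h0).dim = a)).symm i)) := by
    simp [qbasis, Basis.reindex_apply, Basis.map_apply]
  rw [h1, PowerBasis.basis_eq_pow, AdjoinRoot.powerBasis_gen]
  rw [AdjoinRoot.root, ← map_pow]
  have h2 : (((finCongr (by simp : (AdjoinRoot.powerBasis h0).dim = a)).symm i : Fin _) : ℕ)
      = (i : ℕ) := rfl
  rw [h2]
  rfl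

lemma finrank_Qm (a : ℕ) : finrank ℂ (Qm a) = a := by
  rw [finrank_eq_card_basis (qbasis a), Fintype.card_fin]

instance qmFinite (a : ℕ) : Module.Finite ℂ (Qm a) := Module.Finite.of_basis (qbasis a)

lemma qm_mk_pow_eq_zero {a m : ℕ} (h : a ≤ m) :
    (Submodule.Quotient.mk ((X : Rp) ^ m) : Qm a) = 0 := by
  rw [Submodule.Quotient.mk_eq_zero]
  exact Ideal.mem_span_singleton.mpr (pow_dvd_pow X h)

lemma indep_qm (a c m : ℕ) (h : ∀ j : Fin m, c + (j : ℕ) < a) :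
    LinearIndependent ℂ
      (fun j : Fin m => (Submodule.Quotient.mk ((X : Rp) ^ (c + (j : ℕ))) : Qm a)) := by
  have hinj : Function.Injective (fun j : Fin m => (⟨c + j, h j⟩ : Fin a)) := by
    intro i j hij; simpa [Fin.ext_iff] using hij
  have := ((qbasis a).linearIndependent).comp _ hinj
  convert this using 1
  funext j
  simp [qbasis_eq]

lemma finrank_ker_tau (a k : ℕ) :
    finrank ℂ
      (LinearMap.ker ((LinearMap.lsmul Rp (Qm a) ((X : Rp) ^ k)).restrictScalars ℂ)) = min k a := by
  set μ := (LinearMap.lsmul Rp (Qm a) ((X : Rp) ^ k)).restrictScalars ℂ with hμ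
  have hμmk : ∀ j : ℕ, μ (Submodule.Quotient.mk ((X : Rp) ^ j))
      = (Submodule.Quotient.mk ((X : Rp) ^ (k + j)) : Qm a) := by
    intro j
    show ((X : Rp) ^ k) • (Submodule.Quotient.mk ((X : Rp) ^ j) : Qm a) = _
    rw [← Submodule.Quotient.mk_smul]
    congr 1
    rw [smul_eq_mul, ← pow_add]
  have hA : LinearIndependent ℂ
      (fun j : Fin (min k a) =>
        (Submodule.Quotient.mk ((X : Rp) ^ ((a - min k a) + (j : ℕ))) : Qm a)) :=
    indep_qm a _ _ (fun j => by have := j.isLt; omega)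
  have hAker : Submodule.span ℂ
      (Set.range fun j : Fin (min k a) =>
        (Submodule.Quotient.mk ((X : Rp) ^ ((a - min k a) + (j : ℕ))) : Qm a))
      ≤ LinearMap.ker μ := by
    rw [Submodule.span_le]
    rintro _ ⟨j, rfl⟩
    simp only [SetLike.mem_coe, LinearMap.mem_ker]
    rw [hμmk]
    exact qm_mk_pow_eq_zero (by omega)
  have hB : LinearIndependent ℂ
      (fun j : Fin (a - k) =>
        (Submodule.Quotient.mk ((X : Rp) ^ (k + (j : ℕ))) : Qm a)) :=
    indep_qm a _ _ (fun j => by have := j.isLt; omega)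
  have hBrange : Submodule.span ℂ
      (Set.range fun j : Fin (a - k) =>
        (Submodule.Quotient.mk ((X : Rp) ^ (k + (j : ℕ))) : Qm a))
      ≤ LinearMap.range μ := by
    rw [Submodule.span_le]
    rintro _ ⟨j, rfl⟩
    exact ⟨Submodule.Quotient.mk ((X : Rp) ^ (j : ℕ)), hμmk _⟩
  have h1 : min k a ≤ finrank ℂ (LinearMap.ker μ) := by
    have := Submodule.finrank_mono hAker
    rwa [finrank_span_eq_card hA, Fintype.card_fin] at this
  have h2 : a - k ≤ finrank ℂ (LinearMap.range μ) := by
    have := Submodule.finrank_mono hBrange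
    rwa [finrank_span_eq_card hB, Fintype.card_fin] at this
  have h3 := LinearMap.finrank_range_add_finrank_ker μ
  rw [finrank_Qm] at h3
  omega

section HomTorsion
variable (M : Type) [AddCommGroup M] [Module Rp M] [Module ℂ M] [IsScalarTower ℂ Rp M]

example : SMulCommClass Rp ℂ M := inferInstance

def homEquivTorsionBy (a : ℕ) :
    (Qm a →ₗ[Rp] M) ≃ₗ[ℂ] Submodule.torsionBy Rp M ((X : Rp) ^ a) where
  toFun φ := ⟨φ (Submodule.Quotient.mk 1), by
    rw [Submodule.mem_torsionBy_iff, ← map_smul, ← Submodule.Quotient.mk_smul]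
    have : ((X : Rp) ^ a) • (1 : Rp) = (X : Rp) ^ a := by rw [smul_eq_mul, mul_one]
    rw [this, qm_mk_pow_eq_zero le_rfl, map_zero]⟩
  map_add' φ ψ := by ext; rfl
  map_smul' c φ := by ext; rfl
  invFun m := Submodule.liftQ _ (LinearMap.toSpanSingleton Rp M m.1) (by
    rw [Ideal.span, Submodule.span_le]
    rintro _ rfl
    simpa [LinearMap.toSpanSingleton, SetLike.mem_coe, LinearMap.mem_ker] using m.2)
  left_inv φ := by
    apply Submodule.linearMap_qext
    ext r
    simp only [LinearMap.coe_comp, Function.comp_apply, Submodule.mkQ_apply,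
      Submodule.liftQ_apply, LinearMap.toSpanSingleton_apply]
    rw [← map_smul, ← Submodule.Quotient.mk_smul, smul_eq_mul, mul_one]
  right_inv m := by
    ext
    show (Submodule.liftQ _ _ _) (Submodule.Quotient.mk (1 : Rp)) = _
    rw [Submodule.liftQ_apply, LinearMap.toSpanSingleton_apply, one_smul]

def torsionByEquivKer (a : ℕ) :
    Submodule.torsionBy Rp M ((X : Rp) ^ a)
      ≃ₗ[ℂ] LinearMap.ker ((LinearMap.lsmul Rp M ((X : Rp) ^ a)).restrictScalars ℂ) := by
  have h' : ∀ y : M, y ∈ Submodule.torsionBy Rp M ((X : Rp) ^ a)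
      ↔ y ∈ LinearMap.ker ((LinearMap.lsmul Rp M ((X : Rp) ^ a)).restrictScalars ℂ) := by
    intro y
    simp [Submodule.mem_torsionBy_iff]
  exact
    { toFun := fun x => ⟨x.1, (h' x.1).1 x.2⟩
      invFun := fun x => ⟨x.1, (h' x.1).2 x.2⟩
      map_add' := fun _ _ => rfl
      map_smul' := fun _ _ => rfl
      left_inv := fun _ => rfl
      right_inv := fun _ => rfl }

end HomTorsion

lemma finrank_hom_Qm (a b : ℕ) : finrank ℂ (Qm a →ₗ[Rp] Qm b) = min a b := by
  rw [(homEquivTorsionBy (Qm b) a).finrank_eq, (torsionByEquivKer (Qm b) a).finrank_eq,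
    finrank_ker_tau]

instance torsionByFinite (a b : ℕ) : Module.Finite ℂ (Submodule.torsionBy Rp (Qm b) ((X : Rp) ^ a)) :=
  Module.Finite.equiv (torsionByEquivKer (Qm b) a).symm

instance homQmFinite (a b : ℕ) : Module.Finite ℂ (Qm a →ₗ[Rp] Qm b) :=
  Module.Finite.equiv (homEquivTorsionBy (Qm b) a).symm

section Congr
variable {M N M' N' : Type*}
  [AddCommGroup M] [Module Rp M]
  [AddCommGroup N] [Module Rp N] [Module ℂ N] [IsScalarTower ℂ Rp N]
  [AddCommGroup M'] [Module Rp M']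
  [AddCommGroup N'] [Module Rp N'] [Module ℂ N'] [IsScalarTower ℂ Rp N']

/-- transport of Hom spaces along `Rp`-linear equivalences, as a `ℂ`-linear equivalence. -/
def rHomCongr (e₁ : M ≃ₗ[Rp] M') (e₂ : N ≃ₗ[Rp] N') :
    (M →ₗ[Rp] N) ≃ₗ[ℂ] (M' →ₗ[Rp] N') where
  toFun g := e₂.toLinearMap ∘ₗ g ∘ₗ e₁.symm.toLinearMap
  invFun g := e₂.symm.toLinearMap ∘ₗ g ∘ₗ e₁.toLinearMap
  map_add' g h := by ext; simp
  map_smul' c g := by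
    ext x
    simp only [LinearMap.coe_comp, LinearEquiv.coe_coe, Function.comp_apply,
      LinearMap.smul_apply, RingHom.id_apply]
    exact e₂.toLinearMap.map_smul_of_tower c _
  left_inv g := by ext; simp
  right_inv g := by ext; simp

end Congr

section PiHom
variable {ι : Type} [Fintype ι] [DecidableEq ι]
variable {M : Type} [AddCommGroup M] [Module Rp M]
variable (N : ι → Type) [∀ i, AddCommGroup (N i)] [∀ i, Module Rp (N i)]
  [∀ i, Module ℂ (N i)] [∀ i, IsScalarTower ℂ Rp (N i)]

def homPiEquiv : (M →ₗ[Rp] (∀ i, N i)) ≃ₗ[ℂ] ∀ i, (M →ₗ[Rp] N i) where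
  toFun g i := LinearMap.proj i ∘ₗ g
  invFun h := LinearMap.pi h
  map_add' g h := rfl
  map_smul' c g := rfl
  left_inv g := by ext; simp
  right_inv h := by ext; simp

end PiHom

section PiQm
variable {ι : Type} [Fintype ι] [DecidableEq ι] (e : ι → ℕ)

lemma finrank_pi_Qm : finrank ℂ (∀ i, Qm (e i)) = ∑ i, e i := by
  rw [Module.finrank_pi_fintype]
  exact Finset.sum_congr rfl fun i _ => finrank_Qm (e i)

lemma finrank_hom_Qm_pi (k : ℕ) :
    finrank ℂ (Qm k →ₗ[Rp] ∀ i, Qm (e i)) = ∑ i, min k (e i) := by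
  rw [(homPiEquiv (fun i => Qm (e i))).finrank_eq, Module.finrank_pi_fintype]
  exact Finset.sum_congr rfl fun i _ => finrank_hom_Qm k (e i)

lemma finrank_end_Qm_pi :
    finrank ℂ ((∀ i, Qm (e i)) →ₗ[Rp] ∀ i, Qm (e i)) = ∑ i, ∑ j, min (e i) (e j) := by
  haveI : ∀ i, Module.Free ℂ (Qm (e i) →ₗ[Rp] ∀ j, Qm (e j)) :=
    fun i => by
      letI : AddCommGroup (Qm (e i) →ₗ[Rp] ∀ j, Qm (e j)) := LinearMap.addCommGroup
      exact Module.Free.of_divisionRing ℂ _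
  rw [show finrank ℂ ((∀ i, Qm (e i)) →ₗ[Rp] ∀ i, Qm (e i))
      = finrank ℂ (∀ i, (Qm (e i) →ₗ[Rp] ∀ j, Qm (e j))) from
    ((LinearMap.lsum (M := ∀ j, Qm (e j)) Rp (fun i => Qm (e i)) ℂ).finrank_eq).symm,
    Module.finrank_pi_fintype]
  refine Finset.sum_congr rfl fun i _ => ?_
  rw [finrank_hom_Qm_pi]

end PiQm

section AEvalPart
variable {n : ℕ} (x : Matrix (Fin (n + 1)) (Fin (n + 1)) ℂ)

abbrev Nmod := Module.AEval' (Matrix.mulVecLin x)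

lemma mulVecLin_pow (k : ℕ) : (x ^ k).mulVecLin = (x.mulVecLin) ^ k := by
  induction k with
  | zero => rw [pow_zero, pow_zero, Matrix.mulVecLin_one]; rfl
  | succ k ih => rw [pow_succ, Matrix.mulVecLin_mul, ih, pow_succ]; rfl

lemma X_pow_smul_nmod (k : ℕ) (m : Nmod x) :
    ((X : Rp) ^ k) • m
      = (Module.AEval'.of x.mulVecLin)
          ((x ^ k).mulVecLin ((Module.AEval'.of x.mulVecLin).symm m)) := by
  apply (Module.AEval'.of x.mulVecLin).symm.injective
  rw [Module.AEval.of_symm_smul, LinearEquiv.symm_apply_apply, map_pow, aeval_X,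
    mulVecLin_pow, Module.End.smul_def]

def kerPowEquivTorsion (k : ℕ) :
    LinearMap.ker ((x ^ k).mulVecLin) ≃ₗ[ℂ] Submodule.torsionBy Rp (Nmod x) ((X : Rp) ^ k) where
  toFun v := ⟨Module.AEval'.of x.mulVecLin v.1, by
    rw [Submodule.mem_torsionBy_iff, X_pow_smul_nmod, LinearEquiv.symm_apply_apply]
    rw [LinearMap.mem_ker.mp v.2, map_zero]⟩
  invFun m := ⟨(Module.AEval'.of x.mulVecLin).symm m.1, by
    rw [LinearMap.mem_ker]
    have := Submodule.mem_torsionBy_iff _ _ |>.mp m.2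
    rw [X_pow_smul_nmod] at this
    exact (Module.AEval'.of x.mulVecLin).injective (by simpa using this)⟩
  map_add' _ _ := rfl
  map_smul' _ _ := rfl
  left_inv _ := rfl
  right_inv _ := rfl

def commEquivEnd :
    LinearMap.ker (LinearMap.mulLeft ℂ x - LinearMap.mulRight ℂ x)
      ≃ₗ[ℂ] (Nmod x →ₗ[Rp] Nmod x) where
  toFun y := LinearMap.ofAEval x.mulVecLin
    ((Module.AEval'.of x.mulVecLin).toLinearMap ∘ₗ Matrix.mulVecLin y.1) (by
      have h0 := LinearMap.mem_ker.mp y.2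
      rw [LinearMap.sub_apply, LinearMap.mulLeft_apply, LinearMap.mulRight_apply] at h0
      have hy : x * y.1 = y.1 * x := sub_eq_zero.mp h0
      intro v
      show (Module.AEval'.of x.mulVecLin) ((y.1).mulVecLin (x.mulVecLin v))
          = (X : Rp) • (Module.AEval'.of x.mulVecLin) ((y.1).mulVecLin v)
      rw [Module.AEval'.X_smul_of]
      congr 1
      calc (y.1).mulVecLin (x.mulVecLin v) = (y.1 * x).mulVecLin v := by
            rw [Matrix.mulVecLin_mul]; rfl
        _ = (x * y.1).mulVecLin v := by rw [hy]
        _ = x.mulVecLin ((y.1).mulVecLin v) := by rw [Matrix.mulVecLin_mul]; rfl)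
  invFun φ := ⟨LinearMap.toMatrix'
      ((Module.AEval'.of x.mulVecLin).symm.toLinearMap
        ∘ₗ (φ.restrictScalars ℂ) ∘ₗ (Module.AEval'.of x.mulVecLin).toLinearMap), by
    rw [LinearMap.mem_ker]
    set g := (Module.AEval'.of x.mulVecLin).symm.toLinearMap
        ∘ₗ (φ.restrictScalars ℂ) ∘ₗ (Module.AEval'.of x.mulVecLin).toLinearMap with hg
    have hcomm : ∀ v, g (x.mulVecLin v) = x.mulVecLin (g v) := by
      intro v
      show (Module.AEval'.of x.mulVecLin).symm
          (φ ((Module.AEval'.of x.mulVecLin) (x.mulVecLin v))) = _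
      rw [← Module.AEval'.X_smul_of, map_smul, Module.AEval.of_symm_X_smul]
      rfl
    have hx : x * LinearMap.toMatrix' g = LinearMap.toMatrix' g * x := by
      apply Matrix.toLin'.injective
      rw [Matrix.toLin'_mul, Matrix.toLin'_mul, Matrix.toLin'_toMatrix']
      apply LinearMap.ext; intro v
      exact (hcomm v).symm
    rw [LinearMap.sub_apply, LinearMap.mulLeft_apply, LinearMap.mulRight_apply, hx, sub_self]⟩
  map_add' y z := by
    apply LinearMap.ext; intro m
    show (Module.AEval'.of x.mulVecLin)
        ((y.1 + z.1).mulVec ((Module.AEval'.of x.mulVecLin).symm m))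
      = (Module.AEval'.of x.mulVecLin) ((y.1).mulVec ((Module.AEval'.of x.mulVecLin).symm m))
        + (Module.AEval'.of x.mulVecLin) ((z.1).mulVec ((Module.AEval'.of x.mulVecLin).symm m))
    rw [Matrix.add_mulVec, map_add]
  map_smul' c y := by
    apply LinearMap.ext; intro m
    show (Module.AEval'.of x.mulVecLin)
        ((c • y.1).mulVec ((Module.AEval'.of x.mulVecLin).symm m))
      = c • (Module.AEval'.of x.mulVecLin) ((y.1).mulVec ((Module.AEval'.of x.mulVecLin).symm m))
    rw [Matrix.smul_mulVec, map_smul]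
  left_inv y := by
    apply Subtype.ext
    apply Matrix.toLin'.injective
    rw [Matrix.toLin'_toMatrix']
    exact LinearMap.ext fun v => rfl
  right_inv φ := by
    apply LinearMap.ext; intro m
    show (Module.AEval'.of x.mulVecLin)
        ((Matrix.toLin' (LinearMap.toMatrix' ((Module.AEval'.of x.mulVecLin).symm.toLinearMap
          ∘ₗ (φ.restrictScalars ℂ) ∘ₗ (Module.AEval'.of x.mulVecLin).toLinearMap)))
          ((Module.AEval'.of x.mulVecLin).symm m)) = φ m
    rw [Matrix.toLin'_toMatrix']
    rfl

end AEvalPart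

section CofR
variable {M N : Type*} [AddCommGroup M] [Module Rp M] [Module ℂ M] [IsScalarTower ℂ Rp M]
  [AddCommGroup N] [Module Rp N] [Module ℂ N] [IsScalarTower ℂ Rp N]

def cEquivOfRp (F : M ≃ₗ[Rp] N) : M ≃ₗ[ℂ] N where
  toFun := F
  invFun := F.symm
  map_add' := map_add F
  map_smul' c m := by
    simp only [RingHom.id_apply]
    rw [← algebraMap_smul Rp c m, map_smul, algebraMap_smul]
  left_inv := F.left_inv
  right_inv := F.right_inv

end CofR

lemma sum_min_eq_sum_sq {ι : Type} [Fintype ι] [DecidableEq ι] (e : ι → ℕ) (K : ℕ)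
    (he : ∀ i, e i ≤ K) :
    ∑ i, ∑ j, min (e i) (e j)
      = ∑ k ∈ Finset.range K, ((Finset.univ.filter fun i => k + 1 ≤ e i).card) ^ 2 := by
  have h1 : ∀ a b k : ℕ, (if k + 1 ≤ a then (1:ℕ) else 0) * (if k + 1 ≤ b then 1 else 0)
      = if k < min a b then 1 else 0 := by
    intro a b k
    by_cases hA : k + 1 ≤ a <;> by_cases hB : k + 1 ≤ b
    · rw [if_pos hA, if_pos hB, if_pos (by omega : k < min a b)]
    · rw [if_pos hA, if_neg hB, if_neg (by omega : ¬ k < min a b)]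
    · rw [if_neg hA, if_pos hB, if_neg (by omega : ¬ k < min a b)]
    · rw [if_neg hA, if_neg hB, if_neg (by omega : ¬ k < min a b)]
  have hind : ∀ a b : ℕ, a ≤ K →
      min a b = ∑ k ∈ Finset.range K,
        (if k + 1 ≤ a then (1:ℕ) else 0) * (if k + 1 ≤ b then 1 else 0) := by
    intro a b ha
    rw [Finset.sum_congr rfl (fun k _ => h1 a b k)]
    rw [← Finset.card_filter]
    have : Finset.filter (fun k => k < min a b) (Finset.range K) = Finset.range (min a b) := by
      ext k; simp only [Finset.mem_filter, Finset.mem_range]; omega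
    rw [this, Finset.card_range]
  calc ∑ i, ∑ j, min (e i) (e j)
      = ∑ i, ∑ j, ∑ k ∈ Finset.range K,
          (if k + 1 ≤ e i then (1:ℕ) else 0) * (if k + 1 ≤ e j then 1 else 0) :=
        Finset.sum_congr rfl fun i _ => Finset.sum_congr rfl fun j _ => hind _ _ (he i)
    _ = ∑ k ∈ Finset.range K, ∑ i, ∑ j,
          (if k + 1 ≤ e i then (1:ℕ) else 0) * (if k + 1 ≤ e j then 1 else 0) := by
        rw [show (∑ i, ∑ j, ∑ k ∈ Finset.range K,
            (if k + 1 ≤ e i then (1:ℕ) else 0) * (if k + 1 ≤ e j then 1 else 0))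
          = ∑ i, ∑ k ∈ Finset.range K, ∑ j,
            (if k + 1 ≤ e i then (1:ℕ) else 0) * (if k + 1 ≤ e j then 1 else 0) from
          Finset.sum_congr rfl fun i _ => Finset.sum_comm]
        exact Finset.sum_comm
    _ = ∑ k ∈ Finset.range K, ((Finset.univ.filter fun i => k + 1 ≤ e i).card) ^ 2 := by
        refine Finset.sum_congr rfl fun k _ => ?_
        rw [← Finset.sum_mul_sum, Finset.card_filter, sq]

/-- The dual partition `μ*`, with `dualPart mu ℓ j = μ*_{j+1} = #{i < ℓ : μ_i ≥ j+1}`. -/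
def dualPart (mu : ℕ → ℕ) (ℓ : ℕ) (j : ℕ) : ℕ :=
  ((Finset.range ℓ).filter (fun i => j + 1 ≤ mu i)).card

/-- The dimension of the nilpotent conjugacy class in `gl_{n+1}(ℂ)`
with Jordan type `λ` equals `(n+1)² - Σ_i (λ*_i)²`, where `λ*` is the dual partition.
The dimension of the `GL_{n+1}`-orbit of `x` is the dimension of its tangent space
at `x`, namely the rank of `ad x : y ↦ x*y - y*x`; equivalently `(n+1)²` minus the
dimension of the centralizer of `x`.  A nilpotent `x` has Jordan type `λ` iff
`rank (x^k) = Σ_i max(λ_i - k, 0)` for every `k`. -/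
theorem dim_nilpotent_class (n ℓ : ℕ) (lam : ℕ → ℕ)
    (hpos : ∀ i < ℓ, 0 < lam i) (hzero : ∀ i, ℓ ≤ i → lam i = 0)
    (hmono : ∀ i j : ℕ, i ≤ j → lam j ≤ lam i)
    (hsum : ∑ i ∈ Finset.range ℓ, lam i = n + 1)
    (x : Matrix (Fin (n + 1)) (Fin (n + 1)) ℂ) (hx : IsNilpotent x)
    (hjordan : ∀ k : ℕ, (x ^ k).rank = ∑ i ∈ Finset.range ℓ, (lam i - k)) :
    Module.finrank ℂ
        ↥(LinearMap.range
            (LinearMap.mulLeft ℂ x - LinearMap.mulRight ℂ x :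
              Matrix (Fin (n + 1)) (Fin (n + 1)) ℂ →ₗ[ℂ]
                Matrix (Fin (n + 1)) (Fin (n + 1)) ℂ)) =
      (n + 1) ^ 2 - ∑ j ∈ Finset.range (n + 1), (dualPart lam ℓ j) ^ 2 := by
  classical
  -- set up the decomposition of the `ℂ[X]`-module attached to `x`
  obtain ⟨m', hm'⟩ := hx
  have hxm1 : x ^ (m' + 1) = 0 := by rw [pow_succ, hm', zero_mul]
  have hsmulzero : ∀ z : Nmod x, ((X : Rp) ^ (m' + 1)) • z = 0 := by
    intro z
    rw [X_pow_smul_nmod, hxm1]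
    simp
  have htor : Module.IsTorsion Rp (Nmod x) := fun v =>
    ⟨⟨(X : Rp) ^ (m' + 1), mem_nonZeroDivisors_of_ne_zero (pow_ne_zero _ X_ne_zero)⟩, hsmulzero v⟩
  obtain ⟨ι, fι, p, hp, e, ⟨G0⟩⟩ := Module.equiv_directSum_of_isTorsion htor
  haveI := fι
  haveI : DecidableEq ι := Classical.decEq ι
  have hann : ∀ i, (Rp ∙ (p i ^ e i) : Submodule Rp Rp) = Ideal.span {(X : Rp) ^ e i} := by
    intro i
    have hdvd : p i ^ e i ∣ (X : Rp) ^ (m' + 1) := by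
      set u := DirectSum.lof Rp ι (fun i => Rp ⧸ (Rp ∙ (p i ^ e i))) i (Submodule.Quotient.mk 1)
        with hu
      have hz : ((X : Rp) ^ (m' + 1)) • u = 0 := by
        have h1 : u = G0 (G0.symm u) := (G0.apply_symm_apply u).symm
        rw [h1, ← map_smul, hsmulzero, map_zero]
      rw [hu, ← map_smul] at hz
      have h2 := congrArg (fun w => w i) hz
      simp only [DirectSum.lof_apply] at h2
      have h3 : (Submodule.Quotient.mk (((X : Rp) ^ (m' + 1)) • (1 : Rp)) :
          Rp ⧸ (Rp ∙ (p i ^ e i))) = 0 := by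
        rw [Submodule.Quotient.mk_smul]
        simpa using h2
      rw [smul_eq_mul, mul_one, Submodule.Quotient.mk_eq_zero,
        Submodule.mem_span_singleton] at h3
      obtain ⟨c, hc⟩ := h3
      exact ⟨c, by rw [← hc, smul_eq_mul, mul_comm]⟩
    rcases Nat.eq_zero_or_pos (e i) with h0 | h0
    · rw [h0, pow_zero, pow_zero]
    · have hdvdp : p i ∣ (X : Rp) ^ (m' + 1) :=
        dvd_trans (dvd_pow_self _ h0.ne') hdvd
      have hprime : Prime (p i) := UniqueFactorizationMonoid.irreducible_iff_prime.mp (hp i)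
      have hdvdX : p i ∣ (X : Rp) := hprime.dvd_of_dvd_pow hdvdp
      have hassoc : Associated (p i) (X : Rp) :=
        (hp i).associated_of_dvd Polynomial.irreducible_X hdvdX
      show Ideal.span {p i ^ e i} = Ideal.span {(X : Rp) ^ e i}
      exact Ideal.span_singleton_eq_span_singleton.mpr (hassoc.pow_pow)
  let qe : ∀ i, (Rp ⧸ (Rp ∙ (p i ^ e i))) ≃ₗ[Rp] Qm (e i) := fun i =>
    Submodule.quotEquivOfEq _ _ (hann i)
  let G : Nmod x ≃ₗ[Rp] ∀ i, Qm (e i) :=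
    (G0.trans (DirectSum.linearEquivFunOnFintype Rp ι _)).trans (LinearEquiv.piCongrRight qe)
  -- counting: total dimension
  have hsum_e : ∑ i, e i = n + 1 := by
    have h1 : finrank ℂ (Nmod x) = n + 1 := by
      rw [← (Module.AEval'.of x.mulVecLin).finrank_eq, Module.finrank_pi, Fintype.card_fin]
    have h2 : finrank ℂ (Nmod x) = finrank ℂ (∀ i, Qm (e i)) :=
      LinearEquiv.finrank_eq (cEquivOfRp G)
    rw [h1, finrank_pi_Qm e] at h2
    exact h2.symm
  -- counting: ranks of powers
  have hranknull : ∀ k, (x ^ k).rank + ∑ i, min k (e i) = n + 1 := by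
    intro k
    have hk1 : finrank ℂ (LinearMap.ker ((x ^ k).mulVecLin))
        = finrank ℂ (Submodule.torsionBy Rp (Nmod x) ((X : Rp) ^ k)) :=
      LinearEquiv.finrank_eq (kerPowEquivTorsion x k)
    have hk2 : finrank ℂ (Qm k →ₗ[Rp] Nmod x)
        = finrank ℂ (Submodule.torsionBy Rp (Nmod x) ((X : Rp) ^ k)) :=
      LinearEquiv.finrank_eq (homEquivTorsionBy (Nmod x) k)
    have hk3 : finrank ℂ (Qm k →ₗ[Rp] Nmod x) = finrank ℂ (Qm k →ₗ[Rp] ∀ i, Qm (e i)) :=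
      LinearEquiv.finrank_eq (rHomCongr (LinearEquiv.refl Rp (Qm k)) G)
    have hker : finrank ℂ (LinearMap.ker ((x ^ k).mulVecLin)) = ∑ i, min k (e i) := by
      rw [hk1, ← hk2, hk3]
      exact finrank_hom_Qm_pi e k
    have hrn := LinearMap.finrank_range_add_finrank_ker ((x ^ k).mulVecLin)
    rw [hker, Module.finrank_pi, Fintype.card_fin] at hrn
    exact hrn
  -- counting: the commutant
  have hkerad : finrank ℂ (LinearMap.ker
      (LinearMap.mulLeft ℂ x - LinearMap.mulRight ℂ x :
        Matrix (Fin (n + 1)) (Fin (n + 1)) ℂ →ₗ[ℂ] Matrix (Fin (n + 1)) (Fin (n + 1)) ℂ))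
      = ∑ i, ∑ j, min (e i) (e j) := by
    have hc1 : finrank ℂ (LinearMap.ker
        (LinearMap.mulLeft ℂ x - LinearMap.mulRight ℂ x :
          Matrix (Fin (n + 1)) (Fin (n + 1)) ℂ →ₗ[ℂ] Matrix (Fin (n + 1)) (Fin (n + 1)) ℂ))
        = finrank ℂ (Nmod x →ₗ[Rp] Nmod x) :=
      LinearEquiv.finrank_eq (commEquivEnd x)
    have hc2 : finrank ℂ (Nmod x →ₗ[Rp] Nmod x)
        = finrank ℂ ((∀ i, Qm (e i)) →ₗ[Rp] ∀ i, Qm (e i)) :=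
      LinearEquiv.finrank_eq (rHomCongr G G)
    rw [hc1, hc2, finrank_end_Qm_pi]
  -- combinatorics
  have hBk : ∀ k, (∑ i ∈ Finset.range ℓ, min k (lam i)) + (∑ i ∈ Finset.range ℓ, (lam i - k))
      = n + 1 := by
    intro k
    rw [← Finset.sum_add_distrib, ← hsum]
    exact Finset.sum_congr rfl fun i _ => by omega
  have hAB : ∀ k, ∑ i, min k (e i) = ∑ i ∈ Finset.range ℓ, min k (lam i) := by
    intro k
    have h1 := hranknull k
    rw [hjordan k] at h1
    have h2 := hBk k
    omega
  have hstep_e : ∀ k, ∑ i, min (k + 1) (e i)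
      = (∑ i, min k (e i)) + (Finset.univ.filter fun i => k + 1 ≤ e i).card := by
    intro k
    rw [Finset.card_filter, ← Finset.sum_add_distrib]
    refine Finset.sum_congr rfl fun i _ => ?_
    by_cases h : k + 1 ≤ e i
    · rw [if_pos h]; omega
    · rw [if_neg h]; omega
  have hstep_lam : ∀ k, ∑ i ∈ Finset.range ℓ, min (k + 1) (lam i)
      = (∑ i ∈ Finset.range ℓ, min k (lam i)) + dualPart lam ℓ k := by
    intro k
    rw [dualPart, Finset.card_filter, ← Finset.sum_add_distrib]
    refine Finset.sum_congr rfl fun i _ => ?_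
    by_cases h : k + 1 ≤ lam i
    · rw [if_pos h]; omega
    · rw [if_neg h]; omega
  have hcnt : ∀ k, (Finset.univ.filter fun i => k + 1 ≤ e i).card = dualPart lam ℓ k := by
    intro k
    have h1 := hstep_e k
    have h2 := hstep_lam k
    have h3 := hAB k
    have h4 := hAB (k + 1)
    omega
  have he_le : ∀ i, e i ≤ n + 1 := by
    intro i
    rw [← hsum_e]
    exact Finset.single_le_sum (fun j _ => Nat.zero_le _) (Finset.mem_univ i)
  have hmain : ∑ i, ∑ j, min (e i) (e j)
      = ∑ k ∈ Finset.range (n + 1), (dualPart lam ℓ k) ^ 2 := by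
    rw [sum_min_eq_sum_sq e (n + 1) he_le]
    exact Finset.sum_congr rfl fun k _ => by rw [hcnt k]
  -- final rank-nullity on the space of matrices
  have hfinal := LinearMap.finrank_range_add_finrank_ker
    (LinearMap.mulLeft ℂ x - LinearMap.mulRight ℂ x :
      Matrix (Fin (n + 1)) (Fin (n + 1)) ℂ →ₗ[ℂ] Matrix (Fin (n + 1)) (Fin (n + 1)) ℂ)
  rw [hkerad, hmain] at hfinal
  have hmat : finrank ℂ (Matrix (Fin (n + 1)) (Fin (n + 1)) ℂ) = (n + 1) ^ 2 := by
    rw [Module.finrank_matrix, Module.finrank_self, Fintype.card_fin]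
    ring
  rw [hmat] at hfinal
  omega
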